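/- Let P, Q, R be probability distributions on a finite set Ω with all probabilities positive. Then for all real k > 1 and α > 1: D_α(P‖Q) ≤ (kα/(kα−1)) · D_{(kα−1)/(k−1)}(P‖R) + D_{kα}(R‖Q), where D_β(A‖B) = (1/(β−1)) log ( Σ_x A(x)^β B(x)^{1−β} ). -/

import Mathlib

theorem renyi_triangle_like {Ω : Type*} [Fintype Ω] (P Q R : Ω → ℝ)
    (hP : ∀ x, 0 < P x) (hQ : ∀ x, 0 < Q x) (hR : ∀ x, 0 < R x)
    (hPsum : ∑ x, P x = 1) (hQsum : ∑ x, Q x = 1) (hRsum : ∑ x, R x = 1)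
    (k α : ℝ) (hk : 1 < k) (hα : 1 < α) :
    (1 / (α - 1)) * Real.log (∑ x, P x ^ α * Q x ^ (1 - α)) ≤
      (k * α / (k * α - 1)) *
        ((1 / ((k * α - 1) / (k - 1) - 1)) *
          Real.log (∑ x, P x ^ ((k * α - 1) / (k - 1)) * R x ^ (1 - (k * α - 1) / (k - 1)))) +
      (1 / (k * α - 1)) * Real.log (∑ x, R x ^ (k * α) * Q x ^ (1 - k * α)) := by
  have hα0 : (0:ℝ) < α - 1 := by linarith
  have hk0 : (0:ℝ) < k - 1 := by linarith
  have hkα : (1:ℝ) < k * α := by nlinarith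
  have hkα0 : (0:ℝ) < k * α - 1 := by linarith
  have hαpos : (0:ℝ) < α := by linarith
  have hne : (Finset.univ : Finset Ω).Nonempty := by
    rcases (Finset.univ : Finset Ω).eq_empty_or_nonempty with h | h
    · rw [h, Finset.sum_empty] at hPsum; norm_num at hPsum
    · exact h
  set p : ℝ := (k * α - 1) / (α * (k - 1)) with hp_def
  set q : ℝ := (k * α - 1) / (α - 1) with hq_def
  set s : ℝ := k * α * (α - 1) / (k * α - 1) with hs_def
  set β : ℝ := (k * α - 1) / (k - 1) with hβ_def
  have hp1 : 1 < p := by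
    rw [hp_def, lt_div_iff₀ (by positivity)]
    nlinarith
  have hp0 : 0 < p := by linarith
  have hq0 : 0 < q := by rw [hq_def]; positivity
  have hpq : Real.HolderConjugate p q := by
    refine Real.holderConjugate_iff.mpr ⟨hp1, ?_⟩
    rw [hp_def, hq_def]
    field_simp
    ring
  have hαp : α * p = β := by
    rw [hp_def, hβ_def]; field_simp
  have hsp : -s * p = 1 - β := by
    rw [hs_def, hp_def, hβ_def]; field_simp; try ring
  have hsq : s * q = k * α := by
    rw [hs_def, hq_def]; field_simp; try ring
  have h1αq : (1 - α) * q = 1 - k * α := by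
    rw [hq_def]; field_simp; try ring
  set A : ℝ := ∑ x, P x ^ β * R x ^ (1 - β) with hA_def
  set B : ℝ := ∑ x, R x ^ (k * α) * Q x ^ (1 - k * α) with hB_def
  set S : ℝ := ∑ x, P x ^ α * Q x ^ (1 - α) with hS_def
  have hApos : 0 < A := by
    rw [hA_def]
    exact Finset.sum_pos (fun x _ => by have := hP x; have := hR x; positivity) hne
  have hBpos : 0 < B := by
    rw [hB_def]
    exact Finset.sum_pos (fun x _ => by have := hR x; have := hQ x; positivity) hne
  have hSpos : 0 < S := by
    rw [hS_def]
    exact Finset.sum_pos (fun x _ => by have := hP x; have := hQ x; positivity) hne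
  have holder : S ≤ A ^ (1/p) * B ^ (1/q) := by
    have h := Real.inner_le_Lp_mul_Lq Finset.univ
      (fun x => P x ^ α * R x ^ (-s)) (fun x => R x ^ s * Q x ^ (1 - α)) hpq
    have e1 : ∀ x : Ω, P x ^ α * R x ^ (-s) * (R x ^ s * Q x ^ (1 - α))
        = P x ^ α * Q x ^ (1 - α) := by
      intro x
      have : R x ^ (-s) * R x ^ s = 1 := by
        rw [← Real.rpow_add (hR x)]; simp
      calc P x ^ α * R x ^ (-s) * (R x ^ s * Q x ^ (1 - α))
          = P x ^ α * Q x ^ (1 - α) * (R x ^ (-s) * R x ^ s) := by ring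
        _ = P x ^ α * Q x ^ (1 - α) := by rw [this, mul_one]
    have e2 : ∀ x : Ω, |P x ^ α * R x ^ (-s)| ^ p = P x ^ β * R x ^ (1 - β) := by
      intro x
      rw [abs_of_nonneg (by have := hP x; have := hR x; positivity),
        Real.mul_rpow (by have := hP x; positivity) (by have := hR x; positivity),
        ]
      rw [← Real.rpow_mul (hP x).le, ← Real.rpow_mul (hR x).le, hαp, hsp]
    have e3 : ∀ x : Ω, |R x ^ s * Q x ^ (1 - α)| ^ q = R x ^ (k * α) * Q x ^ (1 - k * α) := by
      intro x
      rw [abs_of_nonneg (by have := hR x; have := hQ x; positivity),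
        Real.mul_rpow (by have := hR x; positivity) (by have := hQ x; positivity),
        ← Real.rpow_mul (hR x).le, ← Real.rpow_mul (hQ x).le, hsq, h1αq]
    simp only [e1, e2, e3] at h
    rw [hS_def, hA_def, hB_def]
    exact h
  have hlog : Real.log S ≤ (1/p) * Real.log A + (1/q) * Real.log B := by
    have := Real.log_le_log hSpos holder
    rwa [Real.log_mul (by positivity) (by positivity),
      Real.log_rpow hApos, Real.log_rpow hBpos] at this
  have hmul := mul_le_mul_of_nonneg_left hlog (le_of_lt (one_div_pos.mpr hα0))
  have c1 : (1/(α-1)) * (1/p) = (k * α / (k * α - 1)) * (1/(β - 1)) := by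
    have hd : k * α - 1 - (k - 1) ≠ 0 := by nlinarith
    have hd : (0:ℝ) < k * α - 1 - (k - 1) := by nlinarith
    rw [hp_def, hβ_def, div_sub_one hk0.ne', one_div_div, one_div_div,
      div_mul_div_comm, div_mul_div_comm,
      div_eq_div_iff (by positivity) (by positivity)]
    ring
  have c2 : (1/(α-1)) * (1/q) = 1/(k * α - 1) := by
    rw [hq_def]
    field_simp
  calc (1/(α-1)) * Real.log S
      ≤ (1/(α-1)) * ((1/p) * Real.log A + (1/q) * Real.log B) := hmul
    _ = (1/(α-1)) * (1/p) * Real.log A + (1/(α-1)) * (1/q) * Real.log B := by ring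
    _ = (k * α / (k * α - 1)) * ((1/(β - 1)) * Real.log A) + (1/(k * α - 1)) * Real.log B := by
        rw [c1, c2]; ring
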